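/- Let $J, K \subseteq S$ in $S_n$ and $x \in X_J^{-1} \cap X_K$. Then $x^{-1} W_J x \cap W_K = W_{x^{-1}Jx \cap K}$, where $x^{-1}Jx \cap K$ is the subset of adjacent transpositions $(i,i+1) \in K$ such that $(x(i), x(i+1)) \in J$ (as an unordered pair). -/

import Mathlib

open Equiv Pointwise

/-- The copy of `Sₙ` inside `Equiv.Perm ℕ`: permutations fixing every point `≥ n`
(we use points `0,…,n-1` instead of `1,…,n`). -/
def symN (n : ℕ) : Subgroup (Equiv.Perm ℕ) where
  carrier := {x | ∀ i, n ≤ i → x i = i}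
  one_mem' := fun _ _ => rfl
  mul_mem' := by
    intro a b ha hb i hi
    simp only [Set.mem_setOf_eq] at *
    simp [Equiv.Perm.mul_apply, hb i hi, ha i hi]
  inv_mem' := by
    intro a ha i hi
    simp only [Set.mem_setOf_eq] at *
    conv_lhs => rw [← ha i hi]
    simp

/-- The number of inversions (the Coxeter length in `Sₙ`). -/
def invNum (n : ℕ) (x : Equiv.Perm ℕ) : ℕ :=
  ((Finset.range n ×ˢ Finset.range n).filter
    (fun p => p.1 < p.2 ∧ x p.2 < x p.1)).card

/-- The adjacent transpositions `(k, k+1)` for `k ∈ J`. -/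
def gens (J : Set ℕ) : Set (Equiv.Perm ℕ) := (fun k => Equiv.swap k (k + 1)) '' J

/-- The parabolic subgroup `W_J`. -/
def parabolic (J : Set ℕ) : Subgroup (Equiv.Perm ℕ) := Subgroup.closure (gens J)

/-- `x ∈ X_J`: a minimal length left coset representative of `W_J` in `Sₙ`. -/
def isMinLeft (n : ℕ) (J : Set ℕ) (x : Equiv.Perm ℕ) : Prop :=
  x ∈ symN n ∧ ∀ w ∈ parabolic J, invNum n x ≤ invNum n (x * w)

/-- `x ∈ X_J⁻¹`: a minimal length right coset representative of `W_J` in `Sₙ`. -/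
def isMinRight (n : ℕ) (J : Set ℕ) (x : Equiv.Perm ℕ) : Prop :=
  x ∈ symN n ∧ ∀ w ∈ parabolic J, invNum n x ≤ invNum n (w * x)

/-- `i1` and `j1` lie in the same connected component of the graph `𝒥` with
edges `(k, k+1)` for `k ∈ J`. -/
def sameComp (J : Set ℕ) (i j : ℕ) : Prop :=
  ∀ t, min i j ≤ t → t < max i j → t ∈ J

/-- The vertex set of the connected component of the graph of `J` containing `a`. -/
def comp (J : Set ℕ) (a : ℕ) : Set ℕ := {b | sameComp J a b}

/-- `c` is a composition of `n`. -/
def isComposition (n : ℕ) (c : List ℕ) : Prop := c.sum = n ∧ ∀ k ∈ c, 0 < k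

/-- The `q`-th consecutive block determined by a composition `c`. -/
def blockSet (c : List ℕ) (q : ℕ) : Set ℕ := Set.Ico ((c.take q).sum) ((c.take (q + 1)).sum)

/-- The set of adjacent transpositions corresponding to a composition `c`:
those `(i, i+1)` with `i, i+1` in the same block. -/
def edgesOf (c : List ℕ) : Set ℕ := {i | ∃ q, i ∈ blockSet c q ∧ i + 1 ∈ blockSet c q}

/-- `i` indexes an edge `(i, i+1)` of the image graph `x⁻¹𝒥`, i.e. `(x i, x (i+1))`
is an edge of `𝒥` (as an unordered pair). -/
def imgEdges (x : Equiv.Perm ℕ) (J : Set ℕ) : Set ℕ :=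
  {i | ∃ t ∈ J, (x i = t ∧ x (i + 1) = t + 1) ∨ (x i = t + 1 ∧ x (i + 1) = t)}

lemma sameComp_refl (J : Set ℕ) (i : ℕ) : sameComp J i i := by
  intro t h1 h2; omega

lemma sameComp_symm {J : Set ℕ} {i j : ℕ} (h : sameComp J i j) : sameComp J j i := by
  intro t h1 h2; exact h t (by omega) (by omega)

lemma sameComp_trans {J : Set ℕ} {a b c : ℕ} (h1 : sameComp J a b) (h2 : sameComp J b c) :
    sameComp J a c := by
  intro t ht1 ht2
  rcases (show (min a b ≤ t ∧ t < max a b) ∨ (min b c ≤ t ∧ t < max b c) by omega) with h | h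
  · exact h1 t h.1 h.2
  · exact h2 t h.1 h.2

/-- mem of symN for points below n stays below n -/
lemma symN_lt {n : ℕ} {x : Equiv.Perm ℕ} (hx : x ∈ symN n) {i : ℕ} (hi : i < n) : x i < n := by
  by_contra h
  push_neg at h
  have := hx (x i) h
  have : x (x i) = x i := this
  have : x i = i := x.injective this
  omega

lemma invNum_inv {n : ℕ} {x : Equiv.Perm ℕ} (hx : x ∈ symN n) :
    invNum n x⁻¹ = invNum n x := by
  unfold invNum
  apply Finset.card_bij' (fun p _ => (x⁻¹ p.2, x⁻¹ p.1)) (fun q _ => (x q.2, x q.1))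
  · intro p hp
    simp only [Finset.mem_filter, Finset.mem_product, Finset.mem_range] at hp ⊢
    have h1 : x⁻¹ p.1 < n := symN_lt ((symN n).inv_mem hx) hp.1.1
    have h2 : x⁻¹ p.2 < n := symN_lt ((symN n).inv_mem hx) hp.1.2
    refine ⟨⟨h2, h1⟩, hp.2.2, ?_⟩
    simp [hp.2.1]
  · intro q hq
    simp only [Finset.mem_filter, Finset.mem_product, Finset.mem_range] at hq ⊢
    have h1 : x q.1 < n := symN_lt hx hq.1.1
    have h2 : x q.2 < n := symN_lt hx hq.1.2
    refine ⟨⟨h2, h1⟩, hq.2.2, ?_⟩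
    simp [hq.2.1]
  · intro p _; simp
  · intro q _; simp

lemma swap_lt_of_lt {i a b : ℕ} (hab : a < b) (hne : ¬(a = i ∧ b = i + 1)) :
    Equiv.swap i (i+1) a < Equiv.swap i (i+1) b := by
  rw [Equiv.swap_apply_def, Equiv.swap_apply_def]
  split_ifs <;> omega

lemma invNum_mul_swap_lt {n i : ℕ} {w : Equiv.Perm ℕ} (hi : i + 1 < n)
    (hd : w (i+1) < w i) : invNum n (w * Equiv.swap i (i+1)) < invNum n w := by
  classical
  set s := Equiv.swap i (i+1) with hs
  unfold invNum
  set F := (Finset.range n ×ˢ Finset.range n).filter (fun p => p.1 < p.2 ∧ w p.2 < w p.1) with hF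
  have hmem : (i, i+1) ∈ F := by
    simp only [hF, Finset.mem_filter, Finset.mem_product, Finset.mem_range]
    exact ⟨⟨by omega, hi⟩, by omega, hd⟩
  have hsub : ∀ p ∈ (Finset.range n ×ˢ Finset.range n).filter
      (fun p => p.1 < p.2 ∧ (w * s) p.2 < (w * s) p.1), (s p.1, s p.2) ∈ F.erase (i, i+1) := by
    intro p hp
    simp only [Finset.mem_filter, Finset.mem_product, Finset.mem_range] at hp
    simp only [Equiv.Perm.mul_apply] at hp
    have hpne : ¬(p.1 = i ∧ p.2 = i + 1) := by
      rintro ⟨h1, h2⟩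
      rw [h1, h2] at hp
      simp only [hs, Equiv.swap_apply_left, Equiv.swap_apply_right] at hp
      omega
    have hlt : s p.1 < s p.2 := swap_lt_of_lt hp.2.1 hpne
    have hr1 : s p.1 < n := by
      rw [hs, Equiv.swap_apply_def]; split_ifs <;> omega
    have hr2 : s p.2 < n := by
      rw [hs, Equiv.swap_apply_def]; split_ifs <;> omega
    rw [Finset.mem_erase]
    constructor
    · intro hcon
      have h1 : s p.1 = i := by simpa using congrArg Prod.fst hcon
      have h2 : s p.2 = i + 1 := by simpa using congrArg Prod.snd hcon
      have : p.1 = s i := by rw [← h1]; simp [hs]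
      have hp1 : p.1 = i + 1 := by rw [this, hs, Equiv.swap_apply_left]
      have : p.2 = s (i+1) := by rw [← h2]; simp [hs]
      have hp2 : p.2 = i := by rw [this, hs, Equiv.swap_apply_right]
      omega
    · simp only [hF, Finset.mem_filter, Finset.mem_product, Finset.mem_range]
      exact ⟨⟨hr1, hr2⟩, hlt, hp.2.2⟩
  calc ((Finset.range n ×ˢ Finset.range n).filter
      (fun p => p.1 < p.2 ∧ (w * s) p.2 < (w * s) p.1)).card
      ≤ (F.erase (i, i+1)).card := by
        apply Finset.card_le_card_of_injOn (fun p => (s p.1, s p.2)) (fun p hp => hsub p hp)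
        intro p _ q _ h
        have h1 := congrArg Prod.fst h
        have h2 := congrArg Prod.snd h
        simp only at h1 h2
        exact Prod.ext (s.injective h1) (s.injective h2)
    _ < F.card := Finset.card_erase_lt_of_mem hmem

lemma parabolic_sameComp {J : Set ℕ} {w : Equiv.Perm ℕ} (hw : w ∈ parabolic J) :
    ∀ i, sameComp J i (w i) := by
  induction hw using Subgroup.closure_induction with
  | mem g hg =>
    obtain ⟨k, hk, rfl⟩ := hg
    intro i
    rcases eq_or_ne i k with rfl | h1
    · rw [Equiv.swap_apply_left]
      intro t ht1 ht2
      have : t = i := by omega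
      rwa [this]
    · rcases eq_or_ne i (k+1) with rfl | h2
      · rw [Equiv.swap_apply_right]
        intro t ht1 ht2
        have : t = k := by omega
        rwa [this]
      · rw [Equiv.swap_apply_of_ne_of_ne h1 h2]
        exact sameComp_refl J i
  | one => intro i; exact sameComp_refl J i
  | mul a b _ _ ha hb =>
    intro i
    exact sameComp_trans (hb i) (ha (b i))
  | inv a _ ha =>
    intro i
    have := ha (a⁻¹ i)
    rw [Equiv.Perm.coe_inv, Equiv.apply_symm_apply] at this
    exact sameComp_symm this

lemma sameComp_mem_symN {n : ℕ} {J : Set ℕ} (hJ : ∀ k ∈ J, k + 1 < n)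
    {w : Equiv.Perm ℕ} (hw : ∀ i, sameComp J i (w i)) : w ∈ symN n := by
  intro i hi
  by_contra h
  rcases Nat.lt_or_ge (w i) i with hlt | hge
  · have : i - 1 ∈ J := hw i (i-1) (by omega) (by omega)
    have := hJ _ this
    omega
  · have hgt : i < w i := by omega
    have : i ∈ J := hw i i (by omega) (by omega)
    have := hJ _ this
    omega

lemma eq_one_of_incr {n : ℕ} {w : Equiv.Perm ℕ} (hs : w ∈ symN n)
    (hmono : ∀ a b, a < b → b < n → w a < w b) : w = 1 := by
  have hlow : ∀ a, a < n → w a < n := fun a ha => symN_lt hs ha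
  have hinvmono : ∀ a b, a < b → b < n → w⁻¹ a < w⁻¹ b := by
    intro a b hab hbn
    have ha : w⁻¹ a < n := symN_lt ((symN n).inv_mem hs) (by omega)
    rcases Nat.lt_trichotomy (w⁻¹ a) (w⁻¹ b) with h | h | h
    · exact h
    · exact absurd (w⁻¹.injective h) (by omega)
    · have := hmono _ _ h ha
      simp only [Equiv.Perm.coe_inv, Equiv.apply_symm_apply] at this
      omega
  have hle : ∀ g : Equiv.Perm ℕ, (∀ a b, a < b → b < n → g a < g b) → ∀ a, a < n → a ≤ g a := by
    intro g hg a
    induction a with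
    | zero => omega
    | succ a ih =>
      intro ha
      have h1 := ih (by omega)
      have h2 := hg a (a+1) (by omega) ha
      omega
  ext i
  simp only [Equiv.Perm.coe_one, id_eq]
  rcases Nat.lt_or_ge i n with hi | hi
  · have h1 : i ≤ w i := hle w hmono i hi
    have h2 : w i ≤ i := by
      have := hle w⁻¹ hinvmono (w i) (hlow i hi)
      simp only [Equiv.Perm.coe_inv, Equiv.symm_apply_apply] at this
      omega
    omega
  · exact hs i hi

lemma sameComp_mem_parabolic {n : ℕ} {J : Set ℕ} (hJ : ∀ k ∈ J, k + 1 < n)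
    {w : Equiv.Perm ℕ} (hw : ∀ i, sameComp J i (w i)) : w ∈ parabolic J := by
  generalize hm : invNum n w = m
  induction m using Nat.strong_induction_on generalizing w with
  | _ m ih =>
  by_cases hdesc : ∃ i, i + 1 < n ∧ w (i+1) < w i
  · obtain ⟨i, hin, hd⟩ := hdesc
    -- i ∈ J
    have hiJ : i ∈ J := by
      by_contra hiJ
      have h1 : w i ≤ i := by
        by_contra h
        push_neg at h
        exact hiJ (hw i i (by omega) (by omega))
      have h2 : i + 1 ≤ w (i+1) := by
        by_contra h
        push_neg at h
        exact hiJ (hw (i+1) i (by omega) (by omega))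
      omega
    set s := Equiv.swap i (i+1) with hs
    have hsJ : s ∈ parabolic J := Subgroup.subset_closure ⟨i, hiJ, rfl⟩
    have hcomp : sameComp J i (i+1) := by
      intro t h1 h2
      have : t = i := by omega
      rwa [this]
    have hw' : ∀ j, sameComp J j ((w * s) j) := by
      intro j
      rcases eq_or_ne j i with h1 | h1
      · have heq : (w * s) j = w (i+1) := by
          rw [h1]; simp [hs, Equiv.Perm.mul_apply]
        rw [heq, h1]
        exact sameComp_trans hcomp (hw (i+1))
      · rcases eq_or_ne j (i+1) with h2 | h2
        · have heq : (w * s) j = w i := by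
            rw [h2]; simp [hs, Equiv.Perm.mul_apply]
          rw [heq, h2]
          exact sameComp_trans (sameComp_symm hcomp) (hw i)
        · have heq : (w * s) j = w j := by
            simp [hs, Equiv.Perm.mul_apply, Equiv.swap_apply_of_ne_of_ne h1 h2]
          rw [heq]
          exact hw j
    have hlt : invNum n (w * s) < m := by
      rw [← hm]
      exact invNum_mul_swap_lt hin hd
    have hws : w * s ∈ parabolic J := ih _ hlt hw' rfl
    have : w = (w * s) * s := by
      rw [mul_assoc, hs]
      simp
    rw [this]
    exact (parabolic J).mul_mem hws hsJ
  · push_neg at hdesc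
    have hsN : w ∈ symN n := sameComp_mem_symN hJ hw
    have hmono : ∀ a b, a < b → b < n → w a < w b := by
      intro a b hab hbn
      induction b with
      | zero => omega
      | succ b ihb =>
        have hstep : w b < w (b+1) := by
          have := hdesc b hbn
          rcases Nat.lt_trichotomy (w b) (w (b+1)) with h | h | h
          · exact h
          · exact absurd (w.injective h) (by omega)
          · omega
        rcases Nat.lt_or_ge a b with h | h
        · exact lt_trans (ihb h (by omega)) hstep
        · have : a = b := by omega
          rw [this]; exact hstep
    rw [eq_one_of_incr hsN hmono]
    exact (parabolic J).one_mem

lemma swap_mem_symN {n i : ℕ} (hi : i + 1 < n) : Equiv.swap i (i+1) ∈ symN n := by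
  intro j hj
  apply Equiv.swap_apply_of_ne_of_ne <;> omega

lemma minLeft_incr {n : ℕ} {K : Set ℕ} {x : Equiv.Perm ℕ} (hx : isMinLeft n K x)
    {k : ℕ} (hk : k ∈ K) (hkn : k + 1 < n) : x k < x (k+1) := by
  rcases Nat.lt_trichotomy (x k) (x (k+1)) with h | h | h
  · exact h
  · exact absurd (x.injective h) (by omega)
  · exfalso
    have hs : Equiv.swap k (k+1) ∈ parabolic K := Subgroup.subset_closure ⟨k, hk, rfl⟩
    have := hx.2 _ hs
    have := invNum_mul_swap_lt hkn h
    omega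

lemma minRight_incr {n : ℕ} {J : Set ℕ} {x : Equiv.Perm ℕ} (hx : isMinRight n J x)
    {t : ℕ} (ht : t ∈ J) (htn : t + 1 < n) : x⁻¹ t < x⁻¹ (t+1) := by
  rcases Nat.lt_trichotomy (x⁻¹ t) (x⁻¹ (t+1)) with h | h | h
  · exact h
  · exact absurd (x⁻¹.injective h) (by omega)
  · exfalso
    have hs : Equiv.swap t (t+1) ∈ parabolic J := Subgroup.subset_closure ⟨t, ht, rfl⟩
    have h1 := hx.2 _ hs
    have h2 : invNum n (x⁻¹ * Equiv.swap t (t+1)) < invNum n x⁻¹ := invNum_mul_swap_lt htn h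
    have h3 : invNum n x⁻¹ = invNum n x := invNum_inv hx.1
    have hsx : Equiv.swap t (t+1) * x ∈ symN n :=
      (symN n).mul_mem (swap_mem_symN htn) hx.1
    have h4 : invNum n (x⁻¹ * Equiv.swap t (t+1)) = invNum n (Equiv.swap t (t+1) * x) := by
      have he : x⁻¹ * Equiv.swap t (t+1) = (Equiv.swap t (t+1) * x)⁻¹ := by
        rw [mul_inv_rev, Equiv.swap_inv]
      rw [he, invNum_inv hsx]
    omega

lemma chain {f : ℕ → ℕ} {a b : ℕ} (h : ∀ k, a ≤ k → k < b → f k < f (k+1)) :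
    ∀ c d, a ≤ c → c ≤ d → d ≤ b → f c + (d - c) ≤ f d := by
  intro c d hac hcd
  induction d, hcd using Nat.le_induction with
  | base => omega
  | succ d hcd ih =>
    intro hdb
    have h1 := ih (by omega)
    have h2 := h d (by omega) (by omega)
    omega

/-- Rigidity: together with increasing inverse, x is a shift on [a,b]. -/
lemma rigid {x : Equiv.Perm ℕ} {a b : ℕ} (hab : a ≤ b)
    (h1 : ∀ k, a ≤ k → k < b → x k < x (k+1))
    (h2 : ∀ s, x a ≤ s → s < x b → x⁻¹ s < x⁻¹ (s+1)) :
    ∀ k, a ≤ k → k ≤ b → x k = x a + (k - a) := by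
  have hxb : x a + (b - a) ≤ x b := chain h1 a b le_rfl hab le_rfl
  have hinv : x⁻¹ (x a) + (x b - x a) ≤ x⁻¹ (x b) :=
    chain h2 (x a) (x b) le_rfl (by omega) le_rfl
  simp only [Equiv.Perm.coe_inv, Equiv.symm_apply_apply] at hinv
  intro k hk1 hk2
  have e1 : x a + (k - a) ≤ x k := chain h1 a k le_rfl hk1 hk2
  have e2 : x k + (b - k) ≤ x b := chain h1 k b hk1 hk2 le_rfl
  omega

lemma key {n : ℕ} {J K : Set ℕ} (hJ : ∀ k ∈ J, k + 1 < n) (hK : ∀ k ∈ K, k + 1 < n)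
    {x : Equiv.Perm ℕ} (hxr : isMinRight n J x) (hxl : isMinLeft n K x)
    {a b : ℕ} (hab : a < b)
    (hKab : ∀ k, a ≤ k → k < b → k ∈ K)
    (hJab : sameComp J (x a) (x b)) :
    ∀ k, a ≤ k → k < b → k ∈ imgEdges x J ∩ K := by
  have h1 : ∀ k, a ≤ k → k < b → x k < x (k+1) := fun k hk1 hk2 =>
    minLeft_incr hxl (hKab k hk1 hk2) (hK _ (hKab k hk1 hk2))
  have hxab : x a < x b := by
    have := chain h1 a b le_rfl (le_of_lt hab) le_rfl
    omega
  have hJint : ∀ s, x a ≤ s → s < x b → s ∈ J := by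
    intro s hs1 hs2
    exact hJab s (by omega) (by omega)
  have h2 : ∀ s, x a ≤ s → s < x b → x⁻¹ s < x⁻¹ (s+1) := fun s hs1 hs2 =>
    minRight_incr hxr (hJint s hs1 hs2) (hJ _ (hJint s hs1 hs2))
  have hr := rigid (le_of_lt hab) h1 h2
  have hrb : x b = x a + (b - a) := by
    have := hr b (le_of_lt hab) le_rfl
    omega
  intro k hk1 hk2
  have hrk : x k = x a + (k - a) := hr k hk1 (by omega)
  have hrk1 : x (k+1) = x a + (k + 1 - a) := hr (k+1) (by omega) (by omega)
  refine ⟨⟨x k, hJint (x k) (by omega) (by omega), Or.inl ⟨rfl, by omega⟩⟩, hKab k hk1 hk2⟩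


/-- Solomon's Lemma, type A: for `x ∈ X_J⁻¹ ∩ X_K`,
`x⁻¹ W_J x ⊓ W_K = W_{x⁻¹Jx ∩ K}`, where `x⁻¹Jx ∩ K` consists of those
`(i, i+1) ∈ K` with `(x i, x (i+1)) ∈ J` as an unordered pair. -/
theorem stmt8 (n : ℕ) (J K : Set ℕ)
    (hJ : ∀ k ∈ J, k + 1 < n) (hK : ∀ k ∈ K, k + 1 < n)
    (x : Equiv.Perm ℕ) (hx : isMinRight n J x ∧ isMinLeft n K x) :
    (parabolic J).map (MulAut.conj x⁻¹).toMonoidHom ⊓ parabolic K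
      = parabolic (imgEdges x J ∩ K) := by
  obtain ⟨hxr, hxl⟩ := hx
  apply le_antisymm
  · intro w hw
    rw [Subgroup.mem_inf] at hw
    obtain ⟨hwJ, hwK⟩ := hw
    rw [Subgroup.mem_map] at hwJ
    obtain ⟨u, hu, huw⟩ := hwJ
    have huw' : x⁻¹ * u * x = w := by
      simpa [MulAut.conj_apply] using huw
    have hux : ∀ i, u (x i) = x (w i) := by
      intro i
      have : u = x * w * x⁻¹ := by
        rw [← huw']
        group
      rw [this]
      simp [Equiv.Perm.mul_apply]
    have hJc : ∀ i, sameComp J (x i) (x (w i)) := by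
      intro i
      have := parabolic_sameComp hu (x i)
      rwa [hux i] at this
    have hKc := parabolic_sameComp hwK
    apply sameComp_mem_parabolic (n := n)
    · intro k hk
      exact hK k hk.2
    · intro i k hk1 hk2
      rcases Nat.lt_trichotomy i (w i) with h | h | h
      · have hKab : ∀ k', i ≤ k' → k' < w i → k' ∈ K := by
          intro k' h1' h2'
          exact hKc i k' (by omega) (by omega)
        exact key hJ hK hxr hxl h hKab (hJc i) k (by omega) (by omega)
      · omega
      · have hKab : ∀ k', w i ≤ k' → k' < i → k' ∈ K := by
          intro k' h1' h2'
          exact hKc i k' (by omega) (by omega)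
        exact key hJ hK hxr hxl h hKab (sameComp_symm (hJc i)) k (by omega) (by omega)
  · refine (Subgroup.closure_le _).2 ?_
    rintro g ⟨k, ⟨hkJ, hkK⟩, rfl⟩
    rw [SetLike.mem_coe, Subgroup.mem_inf]
    constructor
    · rw [Subgroup.mem_map]
      obtain ⟨t, ht, hcase⟩ := hkJ
      refine ⟨Equiv.swap (x k) (x (k+1)), ?_, ?_⟩
      · rcases hcase with ⟨e1, e2⟩ | ⟨e1, e2⟩
        · rw [e1, e2]
          exact Subgroup.subset_closure ⟨t, ht, rfl⟩
        · rw [e1, e2, Equiv.swap_comm]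
          exact Subgroup.subset_closure ⟨t, ht, rfl⟩
      · show (MulAut.conj x⁻¹) _ = _
        rw [MulAut.conj_apply, inv_inv]
        have hsw := Equiv.swap_apply_apply x⁻¹ (x k) (x (k+1))
        simp only [Equiv.Perm.coe_inv, Equiv.symm_apply_apply, inv_inv] at hsw
        rw [← hsw]
    · exact Subgroup.subset_closure ⟨k, hkK, rfl⟩
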